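/- For all θ, c, t ∈ ℝ one has the matrix identity exp(t(cos θ·q1 + sin θ·q2 + c·h))·exp(−t·c·h) = [[K1·cos(ct/2)+K2·(cos(θ+ct/2)+c·sin(ct/2)), K1·sin(ct/2)+K2·(sin(θ+ct/2)−c·cos(ct/2))], [−K1·sin(ct/2)+K2·(sin(θ+ct/2)+c·cos(ct/2)), K1·cos(ct/2)+K2·(−cos(θ+ct/2)+c·sin(ct/2))]], where K1 = cosh(√(1−c²)·t/2) if c² ≤ 1 and K1 = cos(√(c²−1)·t/2) if c² > 1, and K2 = sinh(√(1−c²)·t/2)/√(1−c²) if c² < 1, K2 = t/2 if c² = 1, and K2 = sin(√(c²−1)·t/2)/√(c²−1) if c² > 1. -/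

import Mathlib

open Matrix Real

noncomputable def q1 : Matrix (Fin 2) (Fin 2) ℝ := (1/2 : ℝ) • !![1, 0; 0, -1]
noncomputable def q2 : Matrix (Fin 2) (Fin 2) ℝ := (1/2 : ℝ) • !![0, 1; 1, 0]
noncomputable def h : Matrix (Fin 2) (Fin 2) ℝ := (1/2 : ℝ) • !![0, -1; 1, 0]

lemma exp_sq_neg (A : Matrix (Fin 2) (Fin 2) ℝ) (ω : ℝ) (hω : ω ≠ 0)
    (hA : A * A = (-(ω^2)) • 1) :
    NormedSpace.exp A = Real.cos ω • 1 + (Real.sin ω / ω) • A := by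
  letI : SeminormedRing (Matrix (Fin 2) (Fin 2) ℝ) := Matrix.linftyOpSemiNormedRing
  letI : NormedRing (Matrix (Fin 2) (Fin 2) ℝ) := Matrix.linftyOpNormedRing
  letI : NormedAlgebra ℝ (Matrix (Fin 2) (Fin 2) ℝ) := Matrix.linftyOpNormedAlgebra
  have hJ2 : (ω⁻¹ • A) * (ω⁻¹ • A) = -1 := by
    rw [smul_mul_smul_comm, hA, smul_smul]
    rw [show ω⁻¹ * ω⁻¹ * -ω ^ 2 = -1 by field_simp, neg_one_smul]
  set φ : ℂ →ₐ[ℝ] Matrix (Fin 2) (Fin 2) ℝ := Complex.lift ⟨ω⁻¹ • A, hJ2⟩ with hφ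
  have hφcont : Continuous φ := by
    exact LinearMap.continuous_of_finiteDimensional φ.toLinearMap
  have hx : φ ((ω : ℂ) * Complex.I) = A := by
    rw [hφ, Complex.lift_apply, Complex.liftAux_apply]
    simp [smul_smul, hω]
  have hmap := NormedSpace.map_exp φ hφcont ((ω : ℂ) * Complex.I)
  rw [hx] at hmap
  rw [show NormedSpace.exp A = _ from hmap.symm, ← Complex.exp_eq_exp_ℂ,
    Complex.exp_mul_I, ← Complex.ofReal_cos, ← Complex.ofReal_sin, hφ,
    Complex.lift_apply, Complex.liftAux_apply]
  simp [Algebra.algebraMap_eq_smul_one, smul_smul, div_eq_mul_inv, Complex.cos_ofReal_re, Complex.sin_ofReal_re]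

lemma exp_sq_pos (A : Matrix (Fin 2) (Fin 2) ℝ) (ω : ℝ) (hω : ω ≠ 0)
    (hA : A * A = (ω^2) • 1) :
    NormedSpace.exp A = Real.cosh ω • 1 + (Real.sinh ω / ω) • A := by
  letI : SeminormedRing (Matrix (Fin 2) (Fin 2) ℝ) := Matrix.linftyOpSemiNormedRing
  letI : NormedRing (Matrix (Fin 2) (Fin 2) ℝ) := Matrix.linftyOpNormedRing
  letI : NormedAlgebra ℝ (Matrix (Fin 2) (Fin 2) ℝ) := Matrix.linftyOpNormedAlgebra
  set φ : (ℝ × ℝ) →ₐ[ℝ] Matrix (Fin 2) (Fin 2) ℝ :=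
    { toFun := fun p => ((p.1 + p.2)/2) • (1 : Matrix (Fin 2) (Fin 2) ℝ)
        + ((p.1 - p.2)/(2*ω)) • A
      map_one' := by norm_num
      map_mul' := by
        intro p q
        simp only [Prod.fst_mul, Prod.snd_mul, add_mul, mul_add, smul_mul_smul_comm,
          one_mul, mul_one, hA, smul_smul]
        match_scalars <;> field_simp <;> ring
      map_zero' := by norm_num
      map_add' := by
        intro p q
        simp only [Prod.fst_add, Prod.snd_add]
        match_scalars <;> ring
      commutes' := by
        intro r
        simp only [Algebra.algebraMap_eq_smul_one, Prod.smul_mk, Prod.fst_one, Prod.snd_one,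
          Prod.smul_fst, Prod.smul_snd, smul_eq_mul, mul_one]
        match_scalars <;> ring } with hφ
  have hφcont : Continuous φ := by
    exact LinearMap.continuous_of_finiteDimensional φ.toLinearMap
  have hx : φ ((ω, -ω) : ℝ × ℝ) = A := by
    rw [hφ]
    show ((ω + -ω)/2) • _ + ((ω - -ω)/(2*ω)) • A = A
    rw [show (ω - -ω)/(2*ω) = 1 by field_simp; ring]
    simp
  have hexp : NormedSpace.exp ((ω, -ω) : ℝ × ℝ) = (Real.exp ω, Real.exp (-ω)) := by
    refine Prod.ext ?_ ?_
    · rw [Prod.fst_exp, ← Real.exp_eq_exp_ℝ]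
    · rw [Prod.snd_exp, ← Real.exp_eq_exp_ℝ]
  have hmap := NormedSpace.map_exp φ hφcont ((ω, -ω) : ℝ × ℝ)
  rw [hx, hexp] at hmap
  rw [show NormedSpace.exp A = _ from hmap.symm, hφ]
  show ((Real.exp ω + Real.exp (-ω))/2) • _ + ((Real.exp ω - Real.exp (-ω))/(2*ω)) • A = _
  rw [Real.cosh_eq, Real.sinh_eq]
  congr 1
  rw [show (Real.exp ω - Real.exp (-ω))/(2*ω) = (Real.exp ω - Real.exp (-ω))/2/ω by
    field_simp]

lemma exp_sq_zero (A : Matrix (Fin 2) (Fin 2) ℝ) (hA : A * A = 0) :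
    NormedSpace.exp A = 1 + A := by
  simp only [NormedSpace.exp_eq_tsum (𝕂 := ℝ)]
  have hz : ∀ n ∉ ({0, 1} : Finset ℕ), ((n.factorial : ℝ)⁻¹) • A ^ n = 0 := by
    intro n hn
    simp only [Finset.mem_insert, Finset.mem_singleton, not_or] at hn
    obtain ⟨m, rfl⟩ : ∃ m, n = 2 + m := by
      refine ⟨n - 2, ?_⟩
      omega
    rw [pow_add, pow_two, hA, zero_mul, smul_zero]
  rw [tsum_eq_sum hz]
  rw [Finset.sum_pair (by norm_num : (0:ℕ) ≠ 1)]
  norm_num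

lemma exp_h (s : ℝ) : NormedSpace.exp (s • h)
    = !![Real.cos (s/2), -Real.sin (s/2); Real.sin (s/2), Real.cos (s/2)] := by
  rcases eq_or_ne s 0 with rfl | hs
  · rw [zero_smul, NormedSpace.exp_zero]
    ext i j
    fin_cases i <;> fin_cases j <;> norm_num [Matrix.one_apply]
  · have hA : (s • h) * (s • h) = (-((s/2)^2)) • 1 := by
      ext i j
      fin_cases i <;> fin_cases j <;>
        simp [h, Matrix.mul_apply, Fin.sum_univ_two, Matrix.one_apply] <;> ring
    rw [exp_sq_neg _ (s/2) (div_ne_zero hs two_ne_zero) hA]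
    ext i j
    fin_cases i <;> fin_cases j <;>
      simp [h, Matrix.one_apply] <;> field_simp <;> ring

set_option maxHeartbeats 1000000 in
lemma assemble (θ c K1 K2 x : ℝ) :
    (K1 • (1 : Matrix (Fin 2) (Fin 2) ℝ)
        + K2 • !![Real.cos θ, Real.sin θ - c; Real.sin θ + c, -Real.cos θ])
      * !![Real.cos x, Real.sin x; -Real.sin x, Real.cos x] =
    !![K1 * Real.cos x + K2 * (Real.cos (θ + x) + c * Real.sin x),
       K1 * Real.sin x + K2 * (Real.sin (θ + x) - c * Real.cos x);
       -K1 * Real.sin x + K2 * (Real.sin (θ + x) + c * Real.cos x),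
       K1 * Real.cos x + K2 * (-Real.cos (θ + x) + c * Real.sin x)] := by
  ext i j
  fin_cases i <;> fin_cases j <;>
    simp [Matrix.mul_apply, Fin.sum_univ_two, Matrix.one_apply,
      Real.cos_add, Real.sin_add] <;>
    ring

/-- Explicit expression of the geodesics of the `k ⊕ p` problem on `SL(2)`. -/
theorem sl2_geodesic_formula (θ c t : ℝ) :
    NormedSpace.exp (t • (Real.cos θ • q1 + Real.sin θ • q2 + c • h))
        * NormedSpace.exp ((-(t * c)) • h) =
      let K1 : ℝ :=
        if c ^ 2 ≤ 1 then Real.cosh (Real.sqrt (1 - c ^ 2) * t / 2)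
        else Real.cos (Real.sqrt (c ^ 2 - 1) * t / 2)
      let K2 : ℝ :=
        if c ^ 2 < 1 then Real.sinh (Real.sqrt (1 - c ^ 2) * t / 2) / Real.sqrt (1 - c ^ 2)
        else if c ^ 2 = 1 then t / 2
        else Real.sin (Real.sqrt (c ^ 2 - 1) * t / 2) / Real.sqrt (c ^ 2 - 1)
      !![K1 * Real.cos (c * t / 2)
           + K2 * (Real.cos (θ + c * t / 2) + c * Real.sin (c * t / 2)),
         K1 * Real.sin (c * t / 2)
           + K2 * (Real.sin (θ + c * t / 2) - c * Real.cos (c * t / 2));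
         -K1 * Real.sin (c * t / 2)
           + K2 * (Real.sin (θ + c * t / 2) + c * Real.cos (c * t / 2)),
         K1 * Real.cos (c * t / 2)
           + K2 * (-Real.cos (θ + c * t / 2) + c * Real.sin (c * t / 2))] := by
  have hR : NormedSpace.exp ((-(t * c)) • h)
      = !![Real.cos (c*t/2), Real.sin (c*t/2); -Real.sin (c*t/2), Real.cos (c*t/2)] := by
    rw [exp_h, show (-(t*c))/2 = -(c*t/2) by ring]
    simp [Real.cos_neg, Real.sin_neg]
  have hN : t • (Real.cos θ • q1 + Real.sin θ • q2 + c • h)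
      = (t/2) • !![Real.cos θ, Real.sin θ - c; Real.sin θ + c, -Real.cos θ] := by
    ext i j
    fin_cases i <;> fin_cases j <;> simp [q1, q2, h] <;> ring
  have hAA : ((t/2) • !![Real.cos θ, Real.sin θ - c; Real.sin θ + c, -Real.cos θ])
        * ((t/2) • !![Real.cos θ, Real.sin θ - c; Real.sin θ + c, -Real.cos θ])
      = ((t/2)^2 * (1 - c^2)) • 1 := by
    rw [smul_mul_smul_comm, show t/2*(t/2) = (t/2)^2 by ring, mul_smul]
    congr 1
    ext i j
    fin_cases i <;> fin_cases j <;>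
      simp [Matrix.mul_apply, Fin.sum_univ_two, Matrix.one_apply] <;>
      first
        | ring1
        | linear_combination Real.sin_sq_add_cos_sq θ
        | linear_combination -(Real.sin_sq_add_cos_sq θ)
  rw [hR, hN]
  rcases lt_trichotomy (c^2) 1 with hc | hc | hc
  · -- c² < 1
    simp only [if_pos hc.le, if_pos hc]
    have h1c : (0:ℝ) < 1 - c^2 := by linarith
    have hsq : Real.sqrt (1 - c^2) ≠ 0 := ne_of_gt (Real.sqrt_pos.2 h1c)
    rcases eq_or_ne t 0 with rfl | ht
    · rw [show ((0:ℝ)/2) • !![Real.cos θ, Real.sin θ - c; Real.sin θ + c, -Real.cos θ]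
          = (0 : Matrix (Fin 2) (Fin 2) ℝ) by norm_num, NormedSpace.exp_zero,
        show (1 : Matrix (Fin 2) (Fin 2) ℝ)
          = (1:ℝ) • 1 + (0:ℝ) • !![Real.cos θ, Real.sin θ - c; Real.sin θ + c, -Real.cos θ]
          by norm_num, assemble]
      norm_num
    · have hωne : Real.sqrt (1 - c^2) * t / 2 ≠ 0 :=
        div_ne_zero (mul_ne_zero hsq ht) two_ne_zero
      rw [exp_sq_pos _ (Real.sqrt (1 - c^2) * t / 2) hωne
        (by
          rw [hAA]
          congr 1
          rw [show (Real.sqrt (1-c^2)*t/2)^2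
              = Real.sqrt (1-c^2)^2 * (t/2)^2 by ring, Real.sq_sqrt h1c.le]
          ring), smul_smul,
        show Real.sinh (Real.sqrt (1-c^2)*t/2) / (Real.sqrt (1-c^2)*t/2) * (t/2)
          = Real.sinh (Real.sqrt (1-c^2)*t/2) / Real.sqrt (1-c^2) by
            field_simp, assemble]
  · -- c² = 1
    have h1c : (1:ℝ) - c^2 = 0 := by rw [hc]; ring
    simp only [if_pos hc.le, if_neg (show ¬ c^2 < 1 by rw [hc]; exact lt_irrefl 1),
      if_pos hc, h1c, Real.sqrt_zero, zero_mul, zero_div, Real.cosh_zero]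
    rw [exp_sq_zero _ (by rw [hAA, h1c, mul_zero, zero_smul]),
      show (1 : Matrix (Fin 2) (Fin 2) ℝ)
          + (t/2) • !![Real.cos θ, Real.sin θ - c; Real.sin θ + c, -Real.cos θ]
        = (1:ℝ) • 1 + (t/2) • !![Real.cos θ, Real.sin θ - c; Real.sin θ + c, -Real.cos θ]
        by rw [one_smul], assemble]
  · -- c² > 1
    simp only [if_neg (not_le.2 hc), if_neg (not_lt.2 hc.le), if_neg (ne_of_gt hc)]
    have h1c : (0:ℝ) < c^2 - 1 := by linarith
    have hsq : Real.sqrt (c^2 - 1) ≠ 0 := ne_of_gt (Real.sqrt_pos.2 h1c)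
    rcases eq_or_ne t 0 with rfl | ht
    · rw [show ((0:ℝ)/2) • !![Real.cos θ, Real.sin θ - c; Real.sin θ + c, -Real.cos θ]
          = (0 : Matrix (Fin 2) (Fin 2) ℝ) by norm_num, NormedSpace.exp_zero,
        show (1 : Matrix (Fin 2) (Fin 2) ℝ)
          = (1:ℝ) • 1 + (0:ℝ) • !![Real.cos θ, Real.sin θ - c; Real.sin θ + c, -Real.cos θ]
          by norm_num, assemble]
      norm_num
    · have hωne : Real.sqrt (c^2 - 1) * t / 2 ≠ 0 :=
        div_ne_zero (mul_ne_zero hsq ht) two_ne_zero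
      rw [exp_sq_neg _ (Real.sqrt (c^2 - 1) * t / 2) hωne
        (by
          rw [hAA]
          rw [show -((Real.sqrt (c^2-1)*t/2)^2)
              = -(Real.sqrt (c^2-1)^2) * (t/2)^2 by ring, Real.sq_sqrt h1c.le]
          congr 1
          ring), smul_smul,
        show Real.sin (Real.sqrt (c^2-1)*t/2) / (Real.sqrt (c^2-1)*t/2) * (t/2)
          = Real.sin (Real.sqrt (c^2-1)*t/2) / Real.sqrt (c^2-1) by
            field_simp, assemble]
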